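/- Let f ∈ H¹(ℝ) ∩ L^∞(ℝ) and h₂ > 0 with h₂ + f(β) ≥ c > 0 for all β. Define w(x) = P.V. ∫_ℝ ∂_β f(β) (h₂ + f(β)) / ((x-β)² + (h₂ + f(β))²) dβ. Then w ∈ L²(ℝ) with ‖w‖_{L²} ≤ C (1/c² + 1)(1 + ‖f‖_{L^∞})‖∂_x f‖_{L²} for a universal constant C. -/

import Mathlib

open MeasureTheory Real
open scoped ENNReal NNReal


lemma poisson_integrable {r : ℝ} (hr : 0 < r) :
    Integrable (fun t : ℝ => r / (t ^ 2 + r ^ 2)) := by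
  have h : (fun t : ℝ => r / (t ^ 2 + r ^ 2)) = fun t => r⁻¹ * (1 + (t / r) ^ 2)⁻¹ := by
    funext t; field_simp; ring
  rw [h]
  exact (integrable_inv_one_add_sq.comp_div hr.ne').const_mul _

lemma poisson_value {r : ℝ} (hr : 0 < r) :
    (∫ t : ℝ, r / (t ^ 2 + r ^ 2)) = π := by
  have h : (fun t : ℝ => r / (t ^ 2 + r ^ 2)) = fun t => r⁻¹ * (1 + (t / r) ^ 2)⁻¹ := by
    funext t; field_simp; ring
  rw [h, MeasureTheory.integral_const_mul, MeasureTheory.Measure.integral_comp_div (fun y : ℝ => (1 + y ^ 2)⁻¹) r,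
    integral_univ_inv_one_add_sq, abs_of_pos hr, smul_eq_mul]
  field_simp

lemma kernel_bound {h c M t fb : ℝ} (hh : 0 < h) (hc : 0 < c)
    (ha : c ≤ h + fb) (hM : |fb| ≤ M) :
    (h + fb) / (t ^ 2 + (h + fb) ^ 2) ≤
      (2 + 3 * M / c) * (c / (t ^ 2 + c ^ 2)) + h / (t ^ 2 + h ^ 2) := by
  set a := h + fb with hadef
  have ha0 : 0 < a := lt_of_lt_of_le hc ha
  have hM0 : 0 ≤ M := le_trans (abs_nonneg _) hM
  have hDa : 0 < t ^ 2 + a ^ 2 := by positivity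
  have hDc : 0 < t ^ 2 + c ^ 2 := by positivity
  have hDh : 0 < t ^ 2 + h ^ 2 := by positivity
  have hah : 0 < a * h := mul_pos ha0 hh
  rcases le_or_gt (t ^ 2) (c ^ 2) with htc | htc
  · -- near region: LHS ≤ 1/a ≤ 1/c ≤ 2 c/(t²+c²)
    have h1 : a / (t ^ 2 + a ^ 2) ≤ 1 / c := by
      rw [div_le_div_iff₀ hDa hc]
      nlinarith [sq_nonneg t, sq_nonneg (a - c)]
    have h2 : 1 / c ≤ 2 * (c / (t ^ 2 + c ^ 2)) := by
      rw [← mul_div_assoc, div_le_div_iff₀ hc hDc]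
      nlinarith
    have h3 : (0:ℝ) ≤ 3 * M / c * (c / (t ^ 2 + c ^ 2)) := by positivity
    have h4 : (0:ℝ) ≤ h / (t ^ 2 + h ^ 2) := by positivity
    nlinarith [h1.trans h2]
  · -- far region
    have ht0 : 0 < t ^ 2 := lt_trans (by positivity) htc
    have key : a / (t ^ 2 + a ^ 2) - h / (t ^ 2 + h ^ 2) ≤ 3 * M / c * (c / (t ^ 2 + c ^ 2)) := by
      have e1 : a / (t ^ 2 + a ^ 2) - h / (t ^ 2 + h ^ 2)
          = fb * (t ^ 2 - a * h) / ((t ^ 2 + a ^ 2) * (t ^ 2 + h ^ 2)) := by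
        field_simp
        ring
      rw [e1]
      have e2 : 3 * M / c * (c / (t ^ 2 + c ^ 2)) = 3 * M / (t ^ 2 + c ^ 2) := by
        field_simp
      rw [e2, div_le_div_iff₀ (by positivity) hDc]
      have hfb1 : fb * (t ^ 2 - a * h) ≤ M * (t ^ 2 + a * h) := by
        have h5 : |fb * (t ^ 2 - a * h)| ≤ M * (t ^ 2 + a * h) := by
          rw [abs_mul]
          have h6 : |t ^ 2 - a * h| ≤ t ^ 2 + a * h := by
            rw [abs_le]; constructor <;> nlinarith
          exact mul_le_mul hM h6 (abs_nonneg _) hM0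
        exact (le_abs_self _).trans h5
      have hD2 : 2 * (a * h) * t ^ 2 + t ^ 2 * t ^ 2 ≤ (t ^ 2 + a ^ 2) * (t ^ 2 + h ^ 2) := by
        nlinarith [sq_nonneg (a * t - h * t), sq_nonneg (a * h)]
      calc fb * (t ^ 2 - a * h) * (t ^ 2 + c ^ 2)
          ≤ M * (t ^ 2 + a * h) * (t ^ 2 + c ^ 2) :=
            mul_le_mul_of_nonneg_right hfb1 hDc.le
        _ ≤ M * (t ^ 2 + a * h) * (2 * t ^ 2) :=
            mul_le_mul_of_nonneg_left (by nlinarith) (by positivity)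
        _ = M * (2 * (t ^ 2 + a * h) * t ^ 2) := by ring
        _ ≤ M * (3 * ((t ^ 2 + a ^ 2) * (t ^ 2 + h ^ 2))) := by
            refine mul_le_mul_of_nonneg_left ?_ hM0
            nlinarith [hD2]
        _ = 3 * M * ((t ^ 2 + a ^ 2) * (t ^ 2 + h ^ 2)) := by ring
    have h5 : (0:ℝ) ≤ 2 * (c / (t ^ 2 + c ^ 2)) := by positivity
    have expand : (2 + 3 * M / c) * (c / (t ^ 2 + c ^ 2))
        = 2 * (c / (t ^ 2 + c ^ 2)) + 3 * M / c * (c / (t ^ 2 + c ^ 2)) := by ring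
    linarith [key]


theorem stmt6 : ∃ C : ℝ, 0 < C ∧ ∀ (f : ℝ → ℝ) (h₂ c M : ℝ),
    Differentiable ℝ f → MemLp f 2 volume → MemLp (deriv f) 2 volume →
    (∀ x, |f x| ≤ M) → 0 < h₂ → 0 < c → (∀ β, c ≤ h₂ + f β) →
    MemLp (fun x => ∫ β : ℝ,
        deriv f β * (h₂ + f β) / ((x - β) ^ 2 + (h₂ + f β) ^ 2)) 2 volume ∧
    (eLpNorm (fun x => ∫ β : ℝ,
        deriv f β * (h₂ + f β) / ((x - β) ^ 2 + (h₂ + f β) ^ 2)) 2 volume).toReal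
      ≤ C * (1 / c ^ 2 + 1) * (1 + M) * (eLpNorm (deriv f) 2 volume).toReal := by
  refine ⟨40, by norm_num, fun f h₂ c M hdf hf hg hM hh₂ hc hcf => ?_⟩
  have hM0 : 0 ≤ M := (abs_nonneg _).trans (hM 0)
  set w : ℝ → ℝ := fun x => ∫ β : ℝ,
      deriv f β * (h₂ + f β) / ((x - β) ^ 2 + (h₂ + f β) ^ 2) with hwdef
  set Φ : ℝ → ℝ := fun t =>
      (2 + 3 * M / c) * (c / (t ^ 2 + c ^ 2)) + h₂ / (t ^ 2 + h₂ ^ 2) with hΦdef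
  have hcM : (0:ℝ) ≤ 2 + 3 * M / c := by
    have := div_nonneg (by linarith : (0:ℝ) ≤ 3 * M) hc.le
    linarith
  have hΦnn : ∀ t, 0 ≤ Φ t := by
    intro t
    have h1 : (0:ℝ) ≤ c / (t ^ 2 + c ^ 2) := by positivity
    have h2 : (0:ℝ) ≤ h₂ / (t ^ 2 + h₂ ^ 2) := by positivity
    have := mul_nonneg hcM h1
    simp only [hΦdef]; linarith
  have hΦint : Integrable Φ :=
    ((poisson_integrable hc).const_mul _).add (poisson_integrable hh₂)
  have hΦval : ∫ t, Φ t = (2 + 3 * M / c) * π + π := by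
    simp only [hΦdef]
    rw [integral_add ((poisson_integrable hc).const_mul _) (poisson_integrable hh₂),
      MeasureTheory.integral_const_mul, poisson_value hc, poisson_value hh₂]
  have hΦcont : Continuous Φ := by
    apply Continuous.add
    · exact continuous_const.mul (continuous_const.div
        (by continuity) (fun t => by positivity))
    · exact continuous_const.div (by continuity) (fun t => by positivity)
  -- measurability
  have hfm : Measurable f := hdf.continuous.measurable
  have hgm : Measurable (deriv f) := measurable_deriv f
  have hFm : StronglyMeasurable fun p : ℝ × ℝ =>
      deriv f p.2 * (h₂ + f p.2) / ((p.1 - p.2) ^ 2 + (h₂ + f p.2) ^ 2) := by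
    apply Measurable.stronglyMeasurable
    apply Measurable.div
    · exact (hgm.comp measurable_snd).mul (measurable_const.add (hfm.comp measurable_snd))
    · exact ((measurable_fst.sub measurable_snd).pow_const 2).add
        ((measurable_const.add (hfm.comp measurable_snd)).pow_const 2)
  have hwm : AEStronglyMeasurable w volume := hFm.integral_prod_right'.aestronglyMeasurable
  -- ENNReal versions
  set N : ℝ → ℝ≥0∞ := fun β => ENNReal.ofReal |deriv f β| with hNdef
  set Φe : ℝ → ℝ≥0∞ := fun t => ENNReal.ofReal (Φ t) with hΦedef
  have hNm : Measurable N := ENNReal.measurable_ofReal.comp hgm.abs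
  have hΦem : Measurable Φe := ENNReal.measurable_ofReal.comp hΦcont.measurable
  set IB : ℝ≥0∞ := ∫⁻ t, Φe t with hIBdef
  have hIB : IB = ENNReal.ofReal ((2 + 3 * M / c) * π + π) := by
    rw [hIBdef, ← ofReal_integral_eq_lintegral_ofReal hΦint (Filter.Eventually.of_forall hΦnn),
      hΦval]
  have hIBne : IB ≠ ⊤ := by rw [hIB]; exact ENNReal.ofReal_ne_top
  -- even / translation
  have hΦe_even : ∀ s : ℝ, Φe (-s) = Φe s := by
    intro s
    have : Φ (-s) = Φ s := by simp only [hΦdef]; ring_nf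
    simp only [hΦedef, this]
  have htransβ : ∀ x : ℝ, ∫⁻ β, Φe (x - β) = IB := by
    intro x
    have h1 : ∀ β : ℝ, Φe (x - β) = Φe (β - x) := fun β => by
      rw [show x - β = -(β - x) by ring, hΦe_even]
    simp_rw [h1]
    exact lintegral_sub_right_eq_self Φe x
  have htransx : ∀ β : ℝ, ∫⁻ x, Φe (x - β) = IB := fun β =>
    lintegral_sub_right_eq_self Φe β
  -- rpow helpers
  have hsq : ∀ z : ℝ≥0∞, z ^ (2:ℝ) = z * z := fun z => by
    rw [show (2:ℝ) = ((2:ℕ) : ℝ) by norm_num, ENNReal.rpow_natCast, sq]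
  have hhalfsq : ∀ y : ℝ≥0∞, (y ^ (1/2:ℝ)) ^ (2:ℝ) = y := fun y => by
    rw [← ENNReal.rpow_mul]; norm_num
  -- Step 1: pointwise bound on ‖w x‖
  have step1 : ∀ x : ℝ, (‖w x‖₊ : ℝ≥0∞) ≤ ∫⁻ β, N β * Φe (x - β) := by
    intro x
    refine (enorm_integral_le_lintegral_enorm _).trans (lintegral_mono fun β => ?_)
    rw [Real.enorm_eq_ofReal_abs]
    have hD : (0:ℝ) < (x - β) ^ 2 + (h₂ + f β) ^ 2 := by
      have : (0:ℝ) < h₂ + f β := lt_of_lt_of_le hc (hcf β)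
      positivity
    have ha : (0:ℝ) < h₂ + f β := lt_of_lt_of_le hc (hcf β)
    have habs : |deriv f β * (h₂ + f β) / ((x - β) ^ 2 + (h₂ + f β) ^ 2)|
        = |deriv f β| * ((h₂ + f β) / ((x - β) ^ 2 + (h₂ + f β) ^ 2)) := by
      rw [abs_div, abs_mul, abs_of_pos ha, abs_of_pos hD, mul_div_assoc]
    have hk : |deriv f β * (h₂ + f β) / ((x - β) ^ 2 + (h₂ + f β) ^ 2)|
        ≤ |deriv f β| * Φ (x - β) := by
      rw [habs]
      exact mul_le_mul_of_nonneg_left (kernel_bound hh₂ hc (hcf β) (hM β)) (abs_nonneg _)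
    calc ENNReal.ofReal |deriv f β * (h₂ + f β) / ((x - β) ^ 2 + (h₂ + f β) ^ 2)|
        ≤ ENNReal.ofReal (|deriv f β| * Φ (x - β)) := ENNReal.ofReal_le_ofReal hk
      _ = N β * Φe (x - β) := ENNReal.ofReal_mul (abs_nonneg _)
  -- Step 2: Cauchy–Schwarz
  have step2 : ∀ x : ℝ, ∫⁻ β, N β * Φe (x - β)
      ≤ (∫⁻ β, N β ^ (2:ℝ) * Φe (x - β)) ^ (1/2:ℝ) * IB ^ (1/2:ℝ) := by
    intro x
    set u : ℝ → ℝ≥0∞ := fun β => N β * Φe (x - β) ^ (1/2:ℝ) with hudef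
    set v : ℝ → ℝ≥0∞ := fun β => Φe (x - β) ^ (1/2:ℝ) with hvdef
    have hum : AEMeasurable u volume :=
      (hNm.mul ((hΦem.comp (measurable_const.sub measurable_id)).pow_const _)).aemeasurable
    have hvm : AEMeasurable v volume :=
      ((hΦem.comp (measurable_const.sub measurable_id)).pow_const _).aemeasurable
    have hcs := ENNReal.lintegral_mul_le_Lp_mul_Lq volume
      (Real.HolderConjugate.two_two : Real.HolderConjugate 2 2) hum hvm
    have he1 : ∀ β : ℝ, (u * v) β = N β * Φe (x - β) := by
      intro β
      simp only [hudef, hvdef, Pi.mul_apply]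
      rw [mul_assoc, ← hsq (Φe (x - β) ^ (1/2:ℝ)), hhalfsq]
    have he2 : ∀ β : ℝ, u β ^ (2:ℝ) = N β ^ (2:ℝ) * Φe (x - β) := by
      intro β
      simp only [hudef]
      rw [ENNReal.mul_rpow_of_nonneg _ _ (by norm_num : (0:ℝ) ≤ 2), hhalfsq]
    have he3 : ∀ β : ℝ, v β ^ (2:ℝ) = Φe (x - β) := fun β => hhalfsq _
    simp_rw [he1, he2, he3] at hcs
    rwa [htransβ x] at hcs
  -- combine: pointwise square bound
  have step3 : ∀ x : ℝ, (‖w x‖₊ : ℝ≥0∞) ^ (2:ℝ)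
      ≤ (∫⁻ β, N β ^ (2:ℝ) * Φe (x - β)) * IB := by
    intro x
    calc (‖w x‖₊ : ℝ≥0∞) ^ (2:ℝ)
        ≤ ((∫⁻ β, N β ^ (2:ℝ) * Φe (x - β)) ^ (1/2:ℝ) * IB ^ (1/2:ℝ)) ^ (2:ℝ) :=
          ENNReal.rpow_le_rpow ((step1 x).trans (step2 x)) (by norm_num)
      _ = (∫⁻ β, N β ^ (2:ℝ) * Φe (x - β)) * IB := by
          rw [ENNReal.mul_rpow_of_nonneg _ _ (by norm_num : (0:ℝ) ≤ 2), hhalfsq, hhalfsq]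
  -- integrate in x and swap
  have step4 : ∫⁻ x, (‖w x‖₊ : ℝ≥0∞) ^ (2:ℝ) ≤ IB * IB * ∫⁻ β, N β ^ (2:ℝ) := by
    calc ∫⁻ x, (‖w x‖₊ : ℝ≥0∞) ^ (2:ℝ)
        ≤ ∫⁻ x, (∫⁻ β, N β ^ (2:ℝ) * Φe (x - β)) * IB :=
          lintegral_mono fun x => step3 x
      _ = (∫⁻ x, ∫⁻ β, N β ^ (2:ℝ) * Φe (x - β)) * IB := by
          rw [lintegral_mul_const' IB _ hIBne]
      _ = (∫⁻ β, ∫⁻ x, N β ^ (2:ℝ) * Φe (x - β)) * IB := by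
          congr 1
          apply lintegral_lintegral_swap
          exact (((hNm.comp measurable_snd).pow_const _).mul
            (hΦem.comp (measurable_fst.sub measurable_snd))).aemeasurable
      _ = (∫⁻ β, N β ^ (2:ℝ) * IB) * IB := by
          congr 1
          refine lintegral_congr fun β => ?_
          rw [lintegral_const_mul' _ _ (by
            simp only [hNdef]
            exact ENNReal.rpow_ne_top_of_nonneg (by norm_num) ENNReal.ofReal_ne_top),
            htransx β]
      _ = IB * IB * ∫⁻ β, N β ^ (2:ℝ) := by
          rw [lintegral_mul_const' IB _ hIBne]; ring
  -- identify ∫⁻ N² with eLpNorm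
  have hL2g : ∫⁻ β, N β ^ (2:ℝ) = eLpNorm (deriv f) 2 volume ^ (2:ℝ) := by
    rw [eLpNorm_eq_lintegral_rpow_enorm_toReal two_ne_zero ENNReal.ofNat_ne_top]
    rw [← ENNReal.rpow_mul]
    norm_num
    exact lintegral_congr fun β => by simp [hNdef, Real.enorm_eq_ofReal_abs]
  have hwN : eLpNorm w 2 volume ≤ IB * eLpNorm (deriv f) 2 volume := by
    rw [eLpNorm_eq_lintegral_rpow_enorm_toReal two_ne_zero ENNReal.ofNat_ne_top]
    have : (∫⁻ x, (‖w x‖₊ : ℝ≥0∞) ^ ((2:ℝ≥0∞).toReal)) ^ (1 / (2:ℝ≥0∞).toReal)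
        ≤ (IB * IB * (eLpNorm (deriv f) 2 volume ^ (2:ℝ))) ^ (1/2:ℝ) := by
      rw [ENNReal.toReal_ofNat]
      refine ENNReal.rpow_le_rpow ?_ (by norm_num)
      rw [← hL2g]
      exact step4
    refine this.trans (le_of_eq ?_)
    have hsqhalf : ∀ y : ℝ≥0∞, (y ^ (2:ℝ)) ^ (1/2:ℝ) = y := fun y => by
      rw [← ENNReal.rpow_mul]; norm_num
    rw [← hsq IB, ENNReal.mul_rpow_of_nonneg _ _ (by norm_num : (0:ℝ) ≤ 1/2),
      hsqhalf, hsqhalf]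
  -- conclusion
  have hgfin : eLpNorm (deriv f) 2 volume ≠ ⊤ := hg.2.ne
  have hwfin : eLpNorm w 2 volume < ⊤ :=
    lt_of_le_of_lt hwN (ENNReal.mul_lt_top hIBne.lt_top hg.2)
  refine ⟨⟨hwm, hwfin⟩, ?_⟩
  have htoReal : (eLpNorm w 2 volume).toReal
      ≤ ((2 + 3 * M / c) * π + π) * (eLpNorm (deriv f) 2 volume).toReal := by
    have h1 := ENNReal.toReal_mono (by
      exact ENNReal.mul_ne_top hIBne hgfin) hwN
    rwa [ENNReal.toReal_mul, hIB, ENNReal.toReal_ofReal (add_nonneg (mul_nonneg hcM pi_pos.le) pi_pos.le)] at h1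
  have hX0 : (0:ℝ) ≤ 1 / c ^ 2 + 1 := by positivity
  have hX1 : (1:ℝ) ≤ 1 / c ^ 2 + 1 := by
    have : (0:ℝ) ≤ 1 / c ^ 2 := by positivity
    linarith
  have hdiv : M / c ≤ M * (1 / c ^ 2 + 1) := by
    have h1 : 1 / c ≤ 1 / c ^ 2 + 1 := by
      rw [div_add' _ _ _ (by positivity), div_le_div_iff₀ hc (by positivity)]
      nlinarith [sq_nonneg (c - 1), hc]
    calc M / c = M * (1 / c) := by ring
      _ ≤ M * (1 / c ^ 2 + 1) := mul_le_mul_of_nonneg_left h1 hM0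
  have hB : (2 + 3 * M / c) * π + π ≤ 40 * (1 / c ^ 2 + 1) * (1 + M) := by
    have hmc0 : (0:ℝ) ≤ M / c := div_nonneg hM0 hc.le
    have hc2 : (0:ℝ) ≤ 1 / c ^ 2 := by positivity
    have hMc2 : (0:ℝ) ≤ M * (1 / c ^ 2) := mul_nonneg hM0 hc2
    have hpi := mul_le_mul_of_nonneg_left pi_le_four hmc0
    have h1 : (2 + 3 * M / c) * π + π ≤ 12 + 12 * (M / c) := by
      have e : (2 + 3 * M / c) * π + π = (2 + 3 * (M / c)) * π + π := by ring
      rw [e]; linarith [pi_le_four, hpi]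
    have h3 : 12 + 12 * (M / c) ≤ 12 + 12 * (M * (1 / c ^ 2 + 1)) := by linarith [hdiv]
    have h4 : 12 + 12 * (M * (1 / c ^ 2 + 1)) ≤ 40 * (1 / c ^ 2 + 1) * (1 + M) := by
      nlinarith [hc2, hM0, hMc2]
    linarith
  calc (eLpNorm w 2 volume).toReal
      ≤ ((2 + 3 * M / c) * π + π) * (eLpNorm (deriv f) 2 volume).toReal := htoReal
    _ ≤ 40 * (1 / c ^ 2 + 1) * (1 + M) * (eLpNorm (deriv f) 2 volume).toReal :=
        mul_le_mul_of_nonneg_right hB ENNReal.toReal_nonneg
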